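/- Let G = (V,E) be a DAG with maximum out-degree at most d_out and topological depth ℓ (the number of edges in a longest directed path of G). Then for every visit rule r for G, there exists an r-visit ψ of G such that b_r(ψ) ≤ (d_out − 1)·ℓ + 1. -/

import Mathlib

universe u

variable {V : Type u}

/-- Acyclicity of an edge relation (DAG condition). -/
def Acyclic (E : V → V → Prop) : Prop := ∀ v : V, ¬ Relation.TransGen E v v

/-- Immediate predecessors of a vertex. -/
def pre (E : V → V → Prop) (v : V) : Set V := {u | E u v}

/-- Immediate successors of a vertex. -/
def suc (E : V → V → Prop) (v : V) : Set V := {u | E v u}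

/-- The reverse DAG edge relation. -/
def Erev (E : V → V → Prop) : V → V → Prop := fun u v => E v u

/-- `r` is a visit rule for the DAG with edge relation `E`. -/
def VisitRule (E : V → V → Prop) (r : V → Set (Set V)) : Prop :=
  ∀ v : V, (r v).Nonempty ∧ ∀ Q ∈ r v, Q ⊆ pre E v

/-- `ψ` is an `r`-sequence. -/
def IsRSeq (r : V → Set (Set V)) (ψ : List V) : Prop :=
  ψ.Nodup ∧ ∀ i : Fin ψ.length, ∃ Q ∈ r (ψ.get i), ∀ u ∈ Q, u ∈ ψ.take i.1

/-- `ψ` is an `r`-visit: an `r`-sequence containing all vertices. -/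
def IsRVisit (r : V → Set (Set V)) (ψ : List V) : Prop :=
  IsRSeq r ψ ∧ ∀ v : V, v ∈ ψ

/-- The `r`-boundary of a sequence. -/
def boundary (r : V → Set (Set V)) (ψ : List V) : Set V :=
  {v | v ∉ ψ ∧ ∃ Q ∈ r v, Q ≠ (∅ : Set V) ∧ ∀ u ∈ Q, u ∈ ψ}

/-- The `r`-boundary complexity of a sequence. -/
noncomputable def bnd (r : V → Set (Set V)) (ψ : List V) : ℕ :=
  (Finset.Icc 1 ψ.length).sup fun i => (boundary r (ψ.take i)).ncard

/-! ### Auxiliary development for `stmt_8` -/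

lemma mem_boundary {r : V → Set (Set V)} {ψ : List V} {v : V} :
    v ∈ boundary r ψ ↔ v ∉ ψ ∧ ∃ Q ∈ r v, Q ≠ (∅ : Set V) ∧ ∀ u ∈ Q, u ∈ ψ := Iff.rfl

/-- Union of unvisited out-neighborhoods along a stack. -/
def bigU (E : V → V → Prop) (ψ : List V) : List V → Set V
  | [] => ∅
  | a :: s => (suc E a \ {x | x ∈ ψ}) ∪ bigU E ψ s

/-- The DFS invariant: `ψ` is an r-sequence, the stack `σ` (top at head) consists of visited
vertices, forms a reversed path, and every boundary vertex is a successor of a stack vertex. -/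
def DfsInv (E : V → V → Prop) (r : V → Set (Set V)) (ψ σ : List V) : Prop :=
  IsRSeq r ψ ∧ (∀ x ∈ σ, x ∈ ψ) ∧ List.Chain' (fun a b => E b a) σ ∧
    ∀ w ∈ boundary r ψ, ∃ v ∈ σ, E v w

lemma subset_bigU {E : V → V → Prop} {ψ σ : List V} {v : V} (hv : v ∈ σ) :
    suc E v \ {x | x ∈ ψ} ⊆ bigU E ψ σ := by
  induction σ with
  | nil => simp at hv
  | cons a s ih =>
    rcases List.mem_cons.1 hv with rfl | h
    · exact Set.subset_union_left
    · exact (ih h).trans Set.subset_union_right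

lemma sucdiff_le [Fintype V] {E : V → V → Prop} {dout : ℕ}
    (hd : ∀ v : V, (suc E v).ncard ≤ dout)
    {a b : V} {ψ : List V} (hE : E a b) (hb : b ∈ ψ) :
    (suc E a \ {x | x ∈ ψ}).ncard ≤ dout - 1 := by
  have h1 : suc E a \ {x | x ∈ ψ} ⊆ suc E a \ {b} := by
    intro x hx
    refine ⟨hx.1, ?_⟩
    intro hxb
    rw [Set.mem_singleton_iff] at hxb
    subst hxb
    exact hx.2 hb
  calc (suc E a \ {x | x ∈ ψ}).ncard
      ≤ (suc E a \ {b}).ncard := Set.ncard_le_ncard h1 (Set.toFinite _)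
    _ = (suc E a).ncard - 1 := Set.ncard_diff_singleton_of_mem hE
    _ ≤ dout - 1 := Nat.sub_le_sub_right (hd a) 1

lemma countAux [Fintype V] {E : V → V → Prop} {dout : ℕ}
    (hd : ∀ v : V, (suc E v).ncard ≤ dout) :
    ∀ (s : List V) (a : V) (ψ : List V) (B : Set V),
      List.Chain' (fun x y => E y x) (a :: s) → (∀ x ∈ a :: s, x ∈ ψ) →
      B ⊆ bigU E ψ (a :: s) →
      B.ncard ≤ (suc E a \ {x | x ∈ ψ}).ncard + s.length * (dout - 1) := by
  intro s
  induction s with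
  | nil =>
    intro a ψ B _ _ hB
    have : B ⊆ suc E a \ {x | x ∈ ψ} := by
      intro x hx
      have := hB hx
      simpa [bigU] using this
    simpa using Set.ncard_le_ncard this (Set.toFinite _)
  | cons b s ih =>
    intro a ψ B hchain hmem hB
    have hEba : E b a := (List.isChain_cons_cons.1 hchain).1
    have haψ : a ∈ ψ := hmem a List.mem_cons_self
    have h1 : B.ncard ≤ (suc E a \ {x | x ∈ ψ}).ncard + (bigU E ψ (b :: s)).ncard := by
      calc B.ncard ≤ ((suc E a \ {x | x ∈ ψ}) ∪ bigU E ψ (b :: s)).ncard :=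
            Set.ncard_le_ncard hB (Set.toFinite _)
        _ ≤ _ := Set.ncard_union_le _ _
    have h2 : (bigU E ψ (b :: s)).ncard ≤
        (suc E b \ {x | x ∈ ψ}).ncard + s.length * (dout - 1) :=
      ih b ψ (bigU E ψ (b :: s)) (List.isChain_cons_cons.1 hchain).2
        (fun x hx => hmem x (List.mem_cons_of_mem _ hx)) (by rfl)
    have h3 : (suc E b \ {x | x ∈ ψ}).ncard ≤ dout - 1 := sucdiff_le hd hEba haψ
    have h4 : (b :: s).length * (dout - 1) = s.length * (dout - 1) + (dout - 1) := by
      rw [List.length_cons, Nat.succ_mul]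
    omega

lemma bound_le [Fintype V] {E : V → V → Prop} {r : V → Set (Set V)} {dout ℓ : ℕ}
    (hd : ∀ v : V, (suc E v).ncard ≤ dout)
    (hdepth1 : ∀ p : List V, p ≠ [] → p.Chain' E → p.length ≤ ℓ + 1)
    (hr : VisitRule E r) {ψ σ : List V} (hinv : DfsInv E r ψ σ) :
    (boundary r ψ).ncard ≤ (dout - 1) * ℓ + 1 := by
  obtain ⟨hseq, hmem, hchain, hbinv⟩ := hinv
  have hsub : boundary r ψ ⊆ bigU E ψ σ := by
    intro w hw
    obtain ⟨v, hv, hEvw⟩ := hbinv w hw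
    exact subset_bigU hv ⟨hEvw, hw.1⟩
  cases σ with
  | nil =>
    have : boundary r ψ ⊆ (∅ : Set V) := by simpa [bigU] using hsub
    have h0 : (boundary r ψ).ncard = 0 := by
      rw [Set.subset_empty_iff.1 this, Set.ncard_empty]
    omega
  | cons a s =>
    have hchainrev : List.Chain' E (a :: s).reverse :=
      List.isChain_reverse.2 hchain
    have hlen : s.length ≤ ℓ := by
      have h := hdepth1 (a :: s).reverse (by simp) hchainrev
      simp at h
      omega
    rcases eq_or_lt_of_le hlen with heq | hlt
    · -- the top of the stack has no successors
      have hsuc : suc E a = ∅ := by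
        by_contra h
        obtain ⟨w, hw⟩ := Set.nonempty_iff_ne_empty.2 h
        have hch : List.Chain' E (w :: a :: s).reverse :=
          List.isChain_reverse.2 (List.isChain_cons_cons.2 ⟨hw, hchain⟩)
        have := hdepth1 (w :: a :: s).reverse (by simp) hch
        simp at this
        omega
      have h1 := countAux hd s a ψ (boundary r ψ) hchain hmem hsub
      rw [hsuc] at h1
      simp at h1
      have : (boundary r ψ).ncard ≤ ℓ * (dout - 1) := by rw [← heq]; exact h1
      calc (boundary r ψ).ncard ≤ ℓ * (dout - 1) := this
        _ = (dout - 1) * ℓ := Nat.mul_comm _ _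
        _ ≤ (dout - 1) * ℓ + 1 := Nat.le_succ _
    · have h1 := countAux hd s a ψ (boundary r ψ) hchain hmem hsub
      have h2 : (suc E a \ {x | x ∈ ψ}).ncard ≤ dout :=
        le_trans (Set.ncard_le_ncard Set.diff_subset (Set.toFinite _)) (hd a)
      obtain ⟨p, rfl⟩ : ∃ p, ℓ = p + 1 := ⟨ℓ - 1, by omega⟩
      have h3 : s.length * (dout - 1) ≤ p * (dout - 1) :=
        Nat.mul_le_mul_right _ (by omega)
      have h4 : (dout - 1) * (p + 1) + 1 = p * (dout - 1) + (dout - 1) + 1 := by ring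
      omega

lemma bnd_append_le {r : V → Set (Set V)} {ψ : List V} {w : V} {K : ℕ}
    (h1 : bnd r ψ ≤ K) (h2 : (boundary r (ψ ++ [w])).ncard ≤ K) :
    bnd r (ψ ++ [w]) ≤ K := by
  unfold bnd
  refine Finset.sup_le fun i hi => ?_
  rw [Finset.mem_Icc] at hi
  rw [List.length_append, List.length_singleton] at hi
  rcases le_or_gt i ψ.length with h | h
  · rw [List.take_append_of_le_length h]
    have hmem : i ∈ Finset.Icc 1 ψ.length := Finset.mem_Icc.2 ⟨hi.1, h⟩
    exact le_trans
      (Finset.le_sup (f := fun j => (boundary r (ψ.take j)).ncard) hmem) h1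
  · have : (ψ ++ [w]).take i = ψ ++ [w] :=
      List.take_of_length_le (by rw [List.length_append, List.length_singleton]; omega)
    rw [this]
    exact h2

lemma isRSeq_append {r : V → Set (Set V)} {ψ : List V} {w : V}
    (h : IsRSeq r ψ) (hw : w ∉ ψ) {Q : Set V} (hQ : Q ∈ r w) (hQψ : ∀ u ∈ Q, u ∈ ψ) :
    IsRSeq r (ψ ++ [w]) := by
  constructor
  · simp [List.nodup_append, h.1, hw]
    exact fun a ha haw => hw (haw ▸ ha)
  · intro i
    have hi : i.1 < ψ.length + 1 :=
      lt_of_lt_of_le i.2 (le_of_eq (by simp))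
    rcases lt_or_eq_of_le (Nat.lt_succ_iff.1 hi) with hlt | heq
    · have hget : (ψ ++ [w]).get i = ψ.get ⟨i.1, hlt⟩ := by
        simp [List.get_eq_getElem, List.getElem_append_left hlt]
      obtain ⟨Q', hQ', hQ'ψ⟩ := h.2 ⟨i.1, hlt⟩
      refine ⟨Q', by rw [hget]; exact hQ', ?_⟩
      intro u hu
      have := hQ'ψ u hu
      rwa [List.take_append_of_le_length (le_of_lt hlt)]
    · have hget : (ψ ++ [w]).get i = w := by
        simp only [List.get_eq_getElem]
        exact List.getElem_concat_length heq _
      refine ⟨Q, by rw [hget]; exact hQ, ?_⟩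
      intro u hu
      rw [heq, List.take_append_of_le_length (le_refl _), List.take_length]
      exact hQψ u hu

lemma card_unvisited_append [Fintype V] [DecidableEq V] {ψ : List V} {w : V} (hw : w ∉ ψ) :
    (Finset.univ.filter (fun x => x ∉ ψ ++ [w])).card
      = (Finset.univ.filter (fun x => x ∉ ψ)).card - 1 ∧
    0 < (Finset.univ.filter (fun x => x ∉ ψ)).card := by
  have hset : Finset.univ.filter (fun x => x ∉ ψ ++ [w])
      = (Finset.univ.filter (fun x => x ∉ ψ)).erase w := by
    ext x
    simp only [Finset.mem_filter, Finset.mem_univ, true_and, Finset.mem_erase,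
      List.mem_append, List.mem_singleton, not_or]
    tauto
  constructor
  · rw [hset]
    exact Finset.card_erase_of_mem (by simp [hw])
  · exact Finset.card_pos.2 ⟨w, by simp [hw]⟩

lemma extend [Fintype V] [DecidableEq V] {E : V → V → Prop} (hG : Acyclic E)
    {dout ℓ : ℕ} (hd : ∀ v : V, (suc E v).ncard ≤ dout)
    (hdepth1 : ∀ p : List V, p ≠ [] → p.Chain' E → p.length ≤ ℓ + 1)
    {r : V → Set (Set V)} (hr : VisitRule E r) :
    ∀ (k : ℕ) (ψ σ : List V), DfsInv E r ψ σ →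
      2 * (Finset.univ.filter (fun v => v ∉ ψ)).card + σ.length ≤ k →
      bnd r ψ ≤ (dout - 1) * ℓ + 1 →
      ∃ ψf, IsRVisit r ψf ∧ bnd r ψf ≤ (dout - 1) * ℓ + 1 := by
  intro k
  induction k with
  | zero =>
    intro ψ σ hinv hk hbnd
    by_cases hall : ∀ v : V, v ∈ ψ
    · exact ⟨ψ, ⟨hinv.1, hall⟩, hbnd⟩
    · push_neg at hall
      obtain ⟨v₀, hv₀⟩ := hall
      have hm : v₀ ∈ Finset.univ.filter (fun v => v ∉ ψ) := by simp [hv₀]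
      have := Finset.card_pos.2 ⟨_, hm⟩
      omega
  | succ k ih =>
    intro ψ σ hinv hk hbnd
    by_cases hall : ∀ v : V, v ∈ ψ
    · exact ⟨ψ, ⟨hinv.1, hall⟩, hbnd⟩
    push_neg at hall
    obtain ⟨v₀, hv₀⟩ := hall
    obtain ⟨hseq, hmem, hchain, hbinv⟩ := hinv
    cases σ with
    | nil =>
      have hbe : boundary r ψ = ∅ := by
        ext w
        simp only [Set.mem_empty_iff_false, iff_false]
        intro hw
        obtain ⟨v, hv, _⟩ := hbinv w hw
        simp at hv
      haveI : IsIrrefl V (Relation.TransGen E) := ⟨hG⟩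
      obtain ⟨v, hv, hvmin⟩ :=
        (Finite.wellFounded_of_trans_of_irrefl (Relation.TransGen E)).has_min
          {x | x ∉ ψ} ⟨v₀, hv₀⟩
      have hpreds : ∀ u, E u v → u ∈ ψ := by
        intro u hu
        by_contra h
        exact hvmin u h (Relation.TransGen.single hu)
      obtain ⟨Q, hQ⟩ := (hr v).1
      have hQψ : ∀ u ∈ Q, u ∈ ψ := fun u hu => hpreds u ((hr v).2 Q hQ hu)
      have hseq' : IsRSeq r (ψ ++ [v]) := isRSeq_append hseq hv hQ hQψ
      have hinv' : DfsInv E r (ψ ++ [v]) [v] := by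
        refine ⟨hseq', by simp, List.isChain_singleton _, ?_⟩
        intro w hw
        obtain ⟨hwψ, Q', hQ', hQ'ne, hQ'ψ⟩ := hw
        refine ⟨v, by simp, ?_⟩
        by_cases hvQ : v ∈ Q'
        · exact (hr w).2 Q' hQ' hvQ
        · exfalso
          have hwb : w ∈ boundary r ψ := by
            refine ⟨fun h => hwψ (List.mem_append_left _ h), Q', hQ', hQ'ne, ?_⟩
            intro u hu
            rcases List.mem_append.1 (hQ'ψ u hu) with h | h
            · exact h
            · rw [List.mem_singleton] at h
              subst h
              exact absurd hu hvQ
          rw [hbe] at hwb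
          exact hwb
      obtain ⟨hcard, hpos⟩ := card_unvisited_append (V := V) hv
      have hbound' : (boundary r (ψ ++ [v])).ncard ≤ (dout - 1) * ℓ + 1 :=
        bound_le hd hdepth1 hr hinv'
      exact ih (ψ ++ [v]) [v] hinv'
        (by simp only [List.length_cons, List.length_nil] at hk ⊢; omega)
        (bnd_append_le hbnd hbound')
    | cons a s =>
      by_cases hpush : ∃ w, w ∉ ψ ∧ E a w ∧ ∃ Q ∈ r w, ∀ u ∈ Q, u ∈ ψ
      · obtain ⟨w, hwψ, hEaw, Q, hQ, hQψ⟩ := hpush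
        have hseq' : IsRSeq r (ψ ++ [w]) := isRSeq_append hseq hwψ hQ hQψ
        have hinv' : DfsInv E r (ψ ++ [w]) (w :: a :: s) := by
          refine ⟨hseq', ?_, ?_, ?_⟩
          · intro x hx
            rcases List.mem_cons.1 hx with rfl | hx
            · simp
            · exact List.mem_append_left _ (hmem x hx)
          · exact List.isChain_cons_cons.2 ⟨hEaw, hchain⟩
          · intro u hu
            obtain ⟨huψ, Q', hQ', hQ'ne, hQ'ψ⟩ := hu
            by_cases hwQ : w ∈ Q'
            · exact ⟨w, List.mem_cons_self, (hr u).2 Q' hQ' hwQ⟩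
            · have hub : u ∈ boundary r ψ := by
                refine ⟨fun h => huψ (List.mem_append_left _ h), Q', hQ', hQ'ne, ?_⟩
                intro x hx
                rcases List.mem_append.1 (hQ'ψ x hx) with h | h
                · exact h
                · rw [List.mem_singleton] at h
                  subst h
                  exact absurd hx hwQ
              obtain ⟨v', hv', hE'⟩ := hbinv u hub
              exact ⟨v', List.mem_cons_of_mem _ hv', hE'⟩
        obtain ⟨hcard, hpos⟩ := card_unvisited_append (V := V) hwψ
        have hbound' : (boundary r (ψ ++ [w])).ncard ≤ (dout - 1) * ℓ + 1 :=
          bound_le hd hdepth1 hr hinv'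
        exact ih (ψ ++ [w]) (w :: a :: s) hinv'
          (by simp only [List.length_cons] at hk ⊢; omega)
          (bnd_append_le hbnd hbound')
      · have hinv' : DfsInv E r ψ s := by
          refine ⟨hseq, fun x hx => hmem x (List.mem_cons_of_mem _ hx), hchain.tail, ?_⟩
          intro w hw
          obtain ⟨v', hv', hE'⟩ := hbinv w hw
          rcases List.mem_cons.1 hv' with rfl | hv'
          · exfalso
            obtain ⟨hwψ, Q', hQ', _, hQ'ψ⟩ := hw
            exact hpush ⟨w, hwψ, hE', Q', hQ', hQ'ψ⟩
          · exact ⟨v', hv', hE'⟩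
        exact ih ψ s hinv' (by simp only [List.length_cons] at hk; omega) hbnd

theorem stmt_8 {V : Type u} [Fintype V] [DecidableEq V] (E : V → V → Prop) (hG : Acyclic E)
    (dout ℓ : ℕ) (hd : ∀ v : V, (suc E v).ncard ≤ dout)
    (hdepth1 : ∀ p : List V, p ≠ [] → p.Chain' E → p.length ≤ ℓ + 1)
    (hdepth2 : ∃ p : List V, p ≠ [] ∧ p.Chain' E ∧ p.length = ℓ + 1)
    (r : V → Set (Set V)) (hr : VisitRule E r) :
    ∃ ψ : List V, IsRVisit r ψ ∧ bnd r ψ ≤ (dout - 1) * ℓ + 1 := by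
  classical
  have h0 : DfsInv E r [] [] := by
    refine ⟨⟨List.nodup_nil, fun i => absurd i.2 (by simp)⟩, by simp, List.isChain_nil, ?_⟩
    intro w hw
    obtain ⟨_, Q, _, hQne, hQψ⟩ := hw
    exact absurd (Set.eq_empty_iff_forall_notMem.2
      (fun u hu => by simpa using hQψ u hu)) hQne
  refine extend hG hd hdepth1 hr (2 * Fintype.card V) [] [] h0 ?_ (by simp [bnd])
  simp only [List.length_nil, add_zero]
  have := Finset.card_filter_le Finset.univ (fun v : V => v ∉ ([] : List V))
  simp only [Finset.card_univ] at this
  omega
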